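/- arXiv:1705.02294 — 3 statements merged into one kernel-verified Lean document; each statement's English description precedes it below -/
import Mathlib

section
/- Let τ be a permutation of {1,…,n} that moves exactly k points (i.e., |{i : τ(i) ≠ i}| = k). Let E_τ = { {u,v} : u ≠ v, {τ(u), τ(v)} ≠ {u,v} } be the set of unordered pairs not preserved by τ. Then |E_τ| = (k choose 2) − T_τ + (n−k)k, where T_τ is the number of unordered pairs {u,v} with u = τ(v) and v = τ(u), u ≠ v. Since T_τ ≤ k/2, it follows that |E_τ| ≥ k(n − 1 − k/2). -/
open Finset

lemma fpair_eq {α : Type*} [DecidableEq α] {a b c d : α} :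
    ({a, b} : Finset α) = {c, d} ↔ a = c ∧ b = d ∨ a = d ∧ b = c := by
  rw [← Finset.coe_inj]
  simp only [Finset.coe_insert, Finset.coe_singleton]
  exact Set.pair_eq_pair_iff

lemma two_mul_choose_two (n : ℕ) : 2 * n.choose 2 = n * (n - 1) := by
  induction n with
  | zero => simp
  | succ s ih =>
    rw [Nat.choose_succ_succ]
    simp only [Nat.choose_one_right, Nat.add_sub_cancel]
    cases s with
    | zero => simp
    | succ t => rw [Nat.mul_add, ih]; simp [Nat.succ_sub_one]; ring

lemma int_two_mul_choose (n : ℕ) : (2 : ℤ) * (n.choose 2 : ℤ) = (n : ℤ) * ((n : ℤ) - 1) := by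
  cases n with
  | zero => simp
  | succ s =>
    have h := two_mul_choose_two (s + 1)
    have : ((2 * (s+1).choose 2 : ℕ) : ℤ) = (((s+1) * s : ℕ) : ℤ) := by
      rw [h]; simp [Nat.succ_sub_one]
    push_cast at this
    push_cast
    linarith

lemma card_filter_lt {α : Type*} [DecidableEq α] [LinearOrder α] (S : Finset α) :
    ((S ×ˢ S).filter fun p => p.1 < p.2).card = S.card.choose 2 := by
  have hbij : ((S ×ˢ S).filter fun p => p.1 < p.2).card
      = ((S ×ˢ S).filter fun p => p.2 < p.1).card := by
    apply Finset.card_bij' (fun p _ => (p.2, p.1)) (fun p _ => (p.2, p.1)) <;>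
      simp +contextual [Finset.mem_filter, Finset.mem_product, and_comm]
  have hdisj : Disjoint ((S ×ˢ S).filter fun p => p.1 < p.2)
      ((S ×ˢ S).filter fun p => p.2 < p.1) := by
    rw [Finset.disjoint_left]
    intro p hp hq
    simp only [Finset.mem_filter] at hp hq
    exact absurd hq.2 (not_lt.mpr hp.2.le)
  have hunion : ((S ×ˢ S).filter fun p => p.1 < p.2) ∪ ((S ×ˢ S).filter fun p => p.2 < p.1)
      = S.offDiag := by
    ext p
    simp only [Finset.mem_union, Finset.mem_filter, Finset.mem_product, Finset.mem_offDiag,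
      ne_eq]
    constructor
    · rintro (⟨⟨h1, h2⟩, h⟩ | ⟨⟨h1, h2⟩, h⟩)
      · exact ⟨h1, h2, ne_of_lt h⟩
      · exact ⟨h1, h2, (ne_of_lt h).symm⟩
    · rintro ⟨h1, h2, h⟩
      rcases lt_or_gt_of_ne h with h' | h'
      · exact Or.inl ⟨⟨h1, h2⟩, h'⟩
      · exact Or.inr ⟨⟨h1, h2⟩, h'⟩
  have hcard := Finset.card_union_of_disjoint hdisj
  rw [hunion, Finset.offDiag_card] at hcard
  have hmm : S.card * S.card - S.card = S.card * (S.card - 1) := by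
    cases h : S.card with
    | zero => simp
    | succ t => rw [Nat.succ_sub_one, Nat.succ_mul, Nat.add_sub_cancel, Nat.mul_comm]
  have h2 := two_mul_choose_two S.card
  omega

lemma choose_split (m k : ℕ) :
    (((m + k).choose 2 : ℤ)) = (k.choose 2 : ℤ) + (m.choose 2 : ℤ) + (m : ℤ) * k := by
  have h1 := int_two_mul_choose (m + k)
  have h2 := int_two_mul_choose m
  have h3 := int_two_mul_choose k
  push_cast at h1
  nlinarith [h1, h2, h3]

/-- for a permutation `τ` of `[n]` moving exactly `k` points, the number of
unordered pairs not preserved by `τ` equals `C(k,2) − T_τ + (n−k)k` where `T_τ` is the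
number of transposition pairs, and is at least `k(n − 1 − k/2)`. -/
theorem stmt_4 {n : ℕ} (τ : Equiv.Perm (Fin n)) (k : ℕ) (hk : τ.support.card = k) :
    ((Finset.univ.filter fun p : Fin n × Fin n =>
        p.1 < p.2 ∧ ({τ p.1, τ p.2} : Finset (Fin n)) ≠ {p.1, p.2}).card : ℤ) =
      (k.choose 2 : ℤ) -
        ((Finset.univ.filter fun p : Fin n × Fin n =>
            p.1 < p.2 ∧ τ p.1 = p.2 ∧ τ p.2 = p.1).card : ℤ) +
        ((n : ℤ) - (k : ℤ)) * (k : ℤ) ∧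
    (((Finset.univ.filter fun p : Fin n × Fin n =>
        p.1 < p.2 ∧ ({τ p.1, τ p.2} : Finset (Fin n)) ≠ {p.1, p.2}).card : ℝ)) ≥
      (k : ℝ) * ((n : ℝ) - 1 - (k : ℝ) / 2) := by
  classical
  set B := (Finset.univ.filter fun p : Fin n × Fin n =>
      p.1 < p.2 ∧ ({τ p.1, τ p.2} : Finset (Fin n)) ≠ {p.1, p.2}) with hB
  set T := (Finset.univ.filter fun p : Fin n × Fin n =>
      p.1 < p.2 ∧ τ p.1 = p.2 ∧ τ p.2 = p.1) with hT
  set F := (Finset.univ.filter fun p : Fin n × Fin n =>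
      p.1 < p.2 ∧ τ p.1 = p.1 ∧ τ p.2 = p.2) with hF
  have hkn : k ≤ n := by
    rw [← hk]
    simpa using Finset.card_le_univ τ.support
  -- total count
  have htotal : (Finset.univ.filter fun p : Fin n × Fin n => p.1 < p.2).card = n.choose 2 := by
    have : (Finset.univ : Finset (Fin n × Fin n)) = Finset.univ ×ˢ Finset.univ := by
      rw [Finset.univ_product_univ]
    rw [this, card_filter_lt]
    simp
  -- F count
  have hFcard : F.card = (n - k).choose 2 := by
    have hFeq : F = ((τ.supportᶜ) ×ˢ (τ.supportᶜ)).filter fun p => p.1 < p.2 := by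
      ext p
      simp only [hF, Finset.mem_filter, Finset.mem_univ, true_and, Finset.mem_product,
        Finset.mem_compl, Equiv.Perm.mem_support, not_not]
      tauto
    rw [hFeq, card_filter_lt, Finset.card_compl, hk]
    simp
  -- partition
  have hBT : Disjoint B T := by
    rw [Finset.disjoint_left]
    intro p hp hq
    simp only [hB, hT, Finset.mem_filter, Finset.mem_univ, true_and] at hp hq
    exact hp.2 (by rw [hq.2.1, hq.2.2]; exact Finset.pair_comm _ _)
  have hBF : Disjoint B F := by
    rw [Finset.disjoint_left]
    intro p hp hq
    simp only [hB, hF, Finset.mem_filter, Finset.mem_univ, true_and] at hp hq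
    exact hp.2 (by rw [hq.2.1, hq.2.2])
  have hFT : Disjoint F T := by
    rw [Finset.disjoint_left]
    intro p hp hq
    simp only [hF, hT, Finset.mem_filter, Finset.mem_univ, true_and] at hp hq
    exact absurd (hp.2.1.symm.trans hq.2.1) (ne_of_lt hp.1)
  have hcover : (Finset.univ.filter fun p : Fin n × Fin n => p.1 < p.2) = B ∪ F ∪ T := by
    ext p
    simp only [hB, hF, hT, Finset.mem_union, Finset.mem_filter, Finset.mem_univ, true_and]
    constructor
    · intro h
      by_cases hne : ({τ p.1, τ p.2} : Finset (Fin n)) = {p.1, p.2}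
      · rcases fpair_eq.mp hne with ⟨h1, h2⟩ | ⟨h1, h2⟩
        · exact Or.inl (Or.inr ⟨h, h1, h2⟩)
        · exact Or.inr ⟨h, h1, h2⟩
      · exact Or.inl (Or.inl ⟨h, hne⟩)
    · rintro ((⟨h, _⟩ | ⟨h, _⟩) | ⟨h, _⟩) <;> exact h
  have hpart : n.choose 2 = B.card + F.card + T.card := by
    rw [← htotal, hcover, Finset.card_union_of_disjoint (Finset.disjoint_union_left.mpr ⟨hBT, hFT⟩),
      Finset.card_union_of_disjoint hBF]
  -- 2T ≤ k
  have h2T : 2 * T.card ≤ k := by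
    have hdisj : (T : Set (Fin n × Fin n)).PairwiseDisjoint
        (fun p : Fin n × Fin n => ({p.1, p.2} : Finset (Fin n))) := by
      intro p hp q hq hpq
      simp only [Finset.coe_filter, Set.mem_setOf_eq, hT, Finset.mem_coe, Finset.mem_filter,
        Finset.mem_univ, true_and] at hp hq
      rw [Function.onFun, Finset.disjoint_left]
      intro x hx hy
      simp only [Finset.mem_insert, Finset.mem_singleton] at hx hy
      apply hpq
      rcases hx with rfl | rfl <;> rcases hy with h | h
      · have : p.2 = q.2 := by rw [← hp.2.1, h, hq.2.1]
        exact Prod.ext h this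
      · exfalso
        have h1 : p.2 = q.1 := by rw [← hp.2.1, h, hq.2.2]
        have := hp.1
        rw [h, h1] at this
        exact absurd (this.trans hq.1) (lt_irrefl _)
      · exfalso
        have h1 : p.1 = q.2 := by rw [← hp.2.2, h, hq.2.1]
        have := hq.1
        rw [← h, ← h1] at this
        exact absurd (this.trans hp.1) (lt_irrefl _)
      · have : p.1 = q.1 := by rw [← hp.2.2, h, hq.2.2]
        exact Prod.ext this h
    have hsub : T.biUnion (fun p => ({p.1, p.2} : Finset (Fin n))) ⊆ τ.support := by
      intro x hx
      simp only [Finset.mem_biUnion, hT, Finset.mem_filter, Finset.mem_univ, true_and,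
        Finset.mem_insert, Finset.mem_singleton] at hx
      obtain ⟨p, ⟨hlt, h1, h2⟩, hx⟩ := hx
      rw [Equiv.Perm.mem_support]
      rcases hx with rfl | rfl
      · rw [h1]; exact (ne_of_lt hlt).symm
      · rw [h2]; exact ne_of_lt hlt
    have hbc : (T.biUnion fun p => ({p.1, p.2} : Finset (Fin n))).card = 2 * T.card := by
      rw [Finset.card_biUnion hdisj]
      rw [Finset.sum_congr rfl (fun p hp => ?_), Finset.sum_const, smul_eq_mul, mul_comm]
      simp only [hT, Finset.mem_filter, Finset.mem_univ, true_and] at hp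
      rw [Finset.card_insert_of_notMem (by simp [ne_of_lt hp.1]), Finset.card_singleton]
    have := Finset.card_le_card hsub
    rw [hbc, hk] at this
    exact this
  -- the integer identity
  have hchoose : (n.choose 2 : ℤ) = (k.choose 2 : ℤ) + ((n - k).choose 2 : ℤ)
      + ((n : ℤ) - k) * k := by
    have h := choose_split (n - k) k
    have hnk : ((n - k : ℕ) : ℤ) = (n : ℤ) - k := by omega
    rw [Nat.sub_add_cancel hkn] at h
    rw [h, hnk]
  have heq : (B.card : ℤ) = (k.choose 2 : ℤ) - (T.card : ℤ) + ((n : ℤ) - k) * k := by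
    have hp : (n.choose 2 : ℤ) = (B.card : ℤ) + (F.card : ℤ) + (T.card : ℤ) := by
      exact_mod_cast congrArg (Nat.cast : ℕ → ℤ) hpart
    rw [hFcard] at hp
    linarith [hchoose, hp]
  refine ⟨heq, ?_⟩
  -- real inequality
  have heqR : (B.card : ℝ) = (k.choose 2 : ℝ) - (T.card : ℝ) + ((n : ℝ) - k) * k := by
    exact_mod_cast congrArg (Int.cast : ℤ → ℝ) heq
  have hc2 : (2 : ℝ) * (k.choose 2 : ℝ) = (k : ℝ) * ((k : ℝ) - 1) := by
    exact_mod_cast congrArg (Int.cast : ℤ → ℝ) (int_two_mul_choose k)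
  have h2TR : 2 * (T.card : ℝ) ≤ (k : ℝ) := by exact_mod_cast h2T
  rw [heqR]
  nlinarith [h2TR, hc2]
end

section
/- Let X, Y ∈ ℝ^{n×n}, δ > 0, and τ ≥ (1+δ)‖X − Y‖ (operator norm). Let X = ∑ᵢ σᵢ(X) uᵢ vᵢᵀ be a singular value decomposition of X and let X̆ = ∑_{i : σᵢ(X) > τ} σᵢ(X) uᵢ vᵢᵀ be the result of thresholding singular values at τ. Then ‖X̆ − Y‖_F² ≤ 16·min_{0 ≤ r ≤ n} ( τ²·r + ((1+δ)/δ)²·∑_{i ≥ r+1} σᵢ(Y)² ), where σ₁(Y) ≥ ⋯ ≥ σₙ(Y) are the singular values of Y. -/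
open Matrix Finset

namespace Stmt12

variable {n : ℕ}

lemma comb_inner {ι : Type*} [Fintype ι] (w : ι → Fin n → ℝ)
    (s : Finset ι) (t : ι → ℝ) (p : Fin n → ℝ) :
    ∑ b, (∑ k ∈ s, t k * w k b) * p b = ∑ k ∈ s, t k * (∑ b, w k b * p b) := by
  have : ∀ b : Fin n, (∑ k ∈ s, t k * w k b) * p b = ∑ k ∈ s, t k * (w k b * p b) := by
    intro b; rw [Finset.sum_mul]; exact Finset.sum_congr rfl fun k _ => by ring
  rw [Finset.sum_congr rfl fun b _ => this b, Finset.sum_comm]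
  exact Finset.sum_congr rfl fun k _ => by rw [← Finset.mul_sum]

lemma comb_sq {ι : Type*} [Fintype ι] [DecidableEq ι] (w : ι → Fin n → ℝ)
    (hw : ∀ k l, ∑ x, w k x * w l x = if k = l then (1:ℝ) else 0)
    (s : Finset ι) (t : ι → ℝ) :
    ∑ b, (∑ k ∈ s, t k * w k b)^2 = ∑ k ∈ s, t k ^2 := by
  have h1 : ∀ b, (∑ k ∈ s, t k * w k b)^2 = ∑ k ∈ s, ∑ l ∈ s, (t k * t l) * (w k b * w l b) := by
    intro b
    rw [sq, Finset.sum_mul_sum]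
    exact Finset.sum_congr rfl fun k _ => Finset.sum_congr rfl fun l _ => by ring
  rw [Finset.sum_congr rfl fun b _ => h1 b, Finset.sum_comm]
  refine Finset.sum_congr rfl fun k hk => ?_
  rw [Finset.sum_comm]
  have h2 : ∀ l ∈ s, ∑ b, (t k * t l) * (w k b * w l b) = if l = k then t k^2 else 0 := by
    intro l _
    rw [← Finset.mul_sum, hw k l]
    by_cases h : k = l <;> simp [h, eq_comm] <;> ring
  rw [Finset.sum_congr rfl h2, Finset.sum_ite_eq' s k (fun _ => t k ^2)]
  simp [hk]

lemma parseval (v : Fin n → Fin n → ℝ)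
    (hv : ∀ i j, ∑ x, v i x * v j x = if i = j then (1:ℝ) else 0) (p : Fin n → ℝ) :
    ∑ i, (∑ x, v i x * p x)^2 = ∑ x, p x ^2 := by
  have hcol : ∀ x y, ∑ i, v i x * v i y = if x = y then (1:ℝ) else 0 := by
    have h1 : (Matrix.of v) * (Matrix.of v)ᵀ = 1 := by
      ext i j
      simp [Matrix.mul_apply, Matrix.one_apply, hv i j]
    have h2 := mul_eq_one_comm.mp h1
    intro x y
    have := congrFun (congrFun h2 x) y
    simpa [Matrix.mul_apply, Matrix.one_apply] using this
  have := comb_sq (n := n) (fun x => fun i => v i x) hcol Finset.univ p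
  rw [← this]
  exact Finset.sum_congr rfl fun i _ => by
    congr 1
    exact Finset.sum_congr rfl fun x _ => by ring

lemma entry_comb (c : Fin n → ℝ) (u v : Fin n → Fin n → ℝ) (s : Finset (Fin n)) (a b : Fin n) :
    (∑ i ∈ s, c i • Matrix.vecMulVec (u i) (v i)) a b = ∑ i ∈ s, c i * u i a * v i b := by
  rw [Matrix.sum_apply]
  exact Finset.sum_congr rfl fun i _ => by simp [Matrix.vecMulVec_apply]; ring

lemma mulVec_comb (c : Fin n → ℝ) (u v : Fin n → Fin n → ℝ) (s : Finset (Fin n))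
    (p : Fin n → ℝ) (a : Fin n) :
    ((∑ i ∈ s, c i • Matrix.vecMulVec (u i) (v i)).mulVec p) a
      = ∑ i ∈ s, (c i * (∑ x, v i x * p x)) * u i a := by
  unfold Matrix.mulVec dotProduct
  have h1 : ∀ x, (∑ i ∈ s, c i • Matrix.vecMulVec (u i) (v i)) a x * p x
      = ∑ i ∈ s, c i * u i a * (v i x * p x) := by
    intro x
    rw [entry_comb, Finset.sum_mul]
    exact Finset.sum_congr rfl fun i _ => by ring
  rw [Finset.sum_congr rfl fun x _ => h1 x, Finset.sum_comm]
  refine Finset.sum_congr rfl fun i _ => ?_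
  simp only [Finset.mul_sum, Finset.sum_mul]
  exact Finset.sum_congr rfl fun x _ => by ring

lemma mulVec_norm_sq (c : Fin n → ℝ) (u v : Fin n → Fin n → ℝ)
    (hu : ∀ i j, ∑ x, u i x * u j x = if i = j then (1:ℝ) else 0)
    (s : Finset (Fin n)) (p : Fin n → ℝ) :
    ∑ a, (((∑ i ∈ s, c i • Matrix.vecMulVec (u i) (v i)).mulVec p) a)^2
      = ∑ i ∈ s, (c i * (∑ x, v i x * p x))^2 := by
  have := comb_sq u hu s (fun i => c i * (∑ x, v i x * p x))
  rw [← this]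
  exact Finset.sum_congr rfl fun a _ => by rw [mulVec_comb]

lemma frob_comb (c : Fin n → ℝ) (u v : Fin n → Fin n → ℝ)
    (hu : ∀ i j, ∑ x, u i x * u j x = if i = j then (1:ℝ) else 0)
    (hv : ∀ i j, ∑ x, v i x * v j x = if i = j then (1:ℝ) else 0)
    (s : Finset (Fin n)) :
    ∑ a, ∑ b, ((∑ i ∈ s, c i • Matrix.vecMulVec (u i) (v i)) a b)^2 = ∑ i ∈ s, c i ^2 := by
  have h1 : ∀ a, ∑ b, ((∑ i ∈ s, c i • Matrix.vecMulVec (u i) (v i)) a b)^2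
      = ∑ i ∈ s, (c i * u i a)^2 := by
    intro a
    have := comb_sq v hv s (fun i => c i * u i a)
    rw [← this]
    exact Finset.sum_congr rfl fun b _ => by rw [entry_comb]
  rw [Finset.sum_congr rfl fun a _ => h1 a, Finset.sum_comm]
  refine Finset.sum_congr rfl fun i hi => ?_
  have : ∀ a : Fin n, (c i * u i a)^2 = c i ^2 * (u i a * u i a) := fun a => by ring
  rw [Finset.sum_congr rfl fun a _ => this a, ← Finset.mul_sum, hu i i]
  simp

lemma minkowski (a b : Fin n → ℝ) :
    Real.sqrt (∑ i, (a i + b i)^2) ≤ Real.sqrt (∑ i, a i ^2) + Real.sqrt (∑ i, b i ^2) := by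
  have hab : ∑ i, a i * b i ≤ Real.sqrt (∑ i, a i ^2) * Real.sqrt (∑ i, b i ^2) := by
    have h := Finset.sum_mul_sq_le_sq_mul_sq Finset.univ a b
    have h2 : ∑ i, a i * b i ≤ |∑ i, a i * b i| := le_abs_self _
    refine h2.trans ?_
    rw [← Real.sqrt_sq_eq_abs, ← Real.sqrt_mul (by positivity)]
    exact Real.sqrt_le_sqrt h
  have hexp : ∑ i, (a i + b i)^2 = ∑ i, a i^2 + 2*(∑ i, a i * b i) + ∑ i, b i^2 := by
    rw [Finset.mul_sum, ← Finset.sum_add_distrib, ← Finset.sum_add_distrib]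
    exact Finset.sum_congr rfl fun i _ => by ring
  have key : ∑ i, (a i + b i)^2 ≤ (Real.sqrt (∑ i, a i ^2) + Real.sqrt (∑ i, b i ^2))^2 := by
    rw [hexp, add_sq, Real.sq_sqrt (by positivity), Real.sq_sqrt (by positivity)]
    nlinarith [hab]
  calc Real.sqrt (∑ i, (a i + b i)^2) ≤ _ := Real.sqrt_le_sqrt key
    _ = _ := Real.sqrt_sq (by positivity)

variable {n : ℕ}

lemma inner_eq (a b : EuclideanSpace ℝ (Fin n)) : (inner ℝ a b : ℝ) = ∑ x, a x * b x := by
  simp [PiLp.inner_apply, RCLike.inner_apply, conj_trivial]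
  exact Finset.sum_congr rfl fun x _ => mul_comm _ _

lemma sum_smul_apply {d : ℕ} (c : Fin d → ℝ) (w : Fin d → EuclideanSpace ℝ (Fin n)) (y : Fin n) :
    (∑ k, c k • w k) y = ∑ k, c k * w k y := by
  have : ∀ (s : Finset (Fin d)), (∑ k ∈ s, c k • w k) y = ∑ k ∈ s, c k * w k y := by
    intro s
    induction s using Finset.induction with
    | empty => rfl
    | insert _ _ h ih => rw [Finset.sum_insert h, Finset.sum_insert h, ← ih]; rfl
  exact this univ

lemma proj_pyth {d : ℕ} (wb : Fin d → Fin n → ℝ)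
    (hwb : ∀ k l, ∑ x, wb k x * wb l x = if k = l then (1:ℝ) else 0)
    (p : Fin n → ℝ) :
    ∑ y, (p y - ∑ k, (∑ x, wb k x * p x) * wb k y)^2
      = ∑ y, p y ^2 - ∑ k, (∑ x, wb k x * p x)^2 := by
  set c : Fin d → ℝ := fun k => ∑ x, wb k x * p x with hc
  have h1 : ∑ y, (∑ k, c k * wb k y)^2 = ∑ k, c k ^2 := comb_sq wb hwb univ c
  have h2 : ∑ y, (∑ k, c k * wb k y) * p y = ∑ k, c k ^2 := by
    rw [comb_inner wb univ c p]
    exact Finset.sum_congr rfl fun k _ => by rw [sq]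
  have h3 : ∀ y, (p y - ∑ k, c k * wb k y)^2
      = p y^2 - 2 * ((∑ k, c k * wb k y) * p y) + (∑ k, c k * wb k y)^2 := fun y => by ring
  rw [Finset.sum_congr rfl fun y _ => h3 y]
  rw [Finset.sum_add_distrib, Finset.sum_sub_distrib, ← Finset.mul_sum, h2, h1]
  ring

/-- Weyl's inequality for singular values, in explicit SVD form. -/
lemma weyl (X Y : Matrix (Fin n) (Fin n) ℝ) (ε : ℝ)
    (σX : Fin n → ℝ) (u v : Fin n → Fin n → ℝ)
    (hσX0 : ∀ i, 0 ≤ σX i) (hσXmono : Antitone σX)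
    (hu : ∀ i j, ∑ x, u i x * u j x = if i = j then (1 : ℝ) else 0)
    (hv : ∀ i j, ∑ x, v i x * v j x = if i = j then (1 : ℝ) else 0)
    (hX : X = ∑ i, σX i • Matrix.vecMulVec (u i) (v i))
    (σY : Fin n → ℝ) (uY vY : Fin n → Fin n → ℝ)
    (hσY0 : ∀ i, 0 ≤ σY i) (hσYmono : Antitone σY)
    (huY : ∀ i j, ∑ x, uY i x * uY j x = if i = j then (1 : ℝ) else 0)
    (hvY : ∀ i j, ∑ x, vY i x * vY j x = if i = j then (1 : ℝ) else 0)
    (hY : Y = ∑ i, σY i • Matrix.vecMulVec (uY i) (vY i))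
    (hE : ∀ w : Fin n → ℝ,
      Real.sqrt (∑ a, ((X - Y).mulVec w) a ^ 2) ≤ ε * Real.sqrt (∑ a, w a ^ 2))
    (i : Fin n) : σX i ≤ σY i + ε := by
  classical
  set E := EuclideanSpace ℝ (Fin n)
  -- index maps
  have hin : (i : ℕ) < n := i.isLt
  let g1 : Fin ((i : ℕ) + 1) → Fin n := fun k => ⟨(k : ℕ), by omega⟩
  let g2 : Fin (i : ℕ) → Fin n := fun k => ⟨(k : ℕ), by omega⟩
  let vE : Fin n → E := fun j => WithLp.toLp 2 (v j)
  let vYE : Fin n → E := fun j => WithLp.toLp 2 (vY j)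
  let V1 : Submodule ℝ E := Submodule.span ℝ (Set.range (fun k => vE (g1 k)))
  let V2 : Submodule ℝ E := Submodule.span ℝ (Set.range (fun k => vYE (g2 k)))
  have hg1inj : Function.Injective g1 := fun a b h => by
    simpa [g1, Fin.ext_iff] using h
  -- finrank V1 = i+1
  have horth : Orthonormal ℝ (fun k => vE (g1 k)) := by
    rw [orthonormal_iff_ite]
    intro k l
    rw [inner_eq]
    have := hv (g1 k) (g1 l)
    rw [show (vE (g1 k) : Fin n → ℝ) = v (g1 k) from rfl]
    rw [this]
    by_cases h : k = l
    · simp [h]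
    · have : g1 k ≠ g1 l := fun hc => h (hg1inj hc)
      simp [h, this]
  have hV1 : Module.finrank ℝ V1 = (i : ℕ) + 1 := by
    have := finrank_span_eq_card horth.linearIndependent
    simpa using this
  have hV2 : Module.finrank ℝ V2 ≤ (i : ℕ) := by
    have h1 : Set.range (fun k => vYE (g2 k)) = ↑((univ : Finset (Fin (i:ℕ))).image (fun k => vYE (g2 k))) := by
      simp
    have h2 := finrank_span_finset_le_card (R := ℝ) ((univ : Finset (Fin (i:ℕ))).image (fun k => vYE (g2 k)))
    rw [Set.finrank] at h2
    have h3 : V2 = Submodule.span ℝ ↑((univ : Finset (Fin (i:ℕ))).image (fun k => vYE (g2 k))) := by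
      unfold V2; rw [h1]
    rw [h3]
    exact h2.trans (Finset.card_image_le.trans (by simp))
  -- intersection nonzero
  have hrank : 0 < Module.finrank ℝ ↥(V1 ⊓ V2ᗮ) := by
    have hsum := Submodule.finrank_sup_add_finrank_inf_eq V1 V2ᗮ
    have hle : Module.finrank ℝ ↥(V1 ⊔ V2ᗮ) ≤ n := by
      have := Submodule.finrank_le (V1 ⊔ V2ᗮ)
      rwa [finrank_euclideanSpace_fin] at this
    have horth2 := Submodule.finrank_add_finrank_orthogonal V2
    rw [finrank_euclideanSpace_fin] at horth2
    omega
  obtain ⟨w0, hw0⟩ := Module.finrank_pos_iff_exists_ne_zero.mp hrank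
  set w : E := (w0 : E) with hwdef
  have hwne : w ≠ 0 := fun h => hw0 (Submodule.coe_eq_zero.mp h)
  have hw1 : w ∈ V1 := w0.2.1
  have hw2 : w ∈ V2ᗮ := w0.2.2
  -- representation of w in span of v's
  obtain ⟨c, hc⟩ := (Submodule.mem_span_range_iff_exists_fun ℝ).mp hw1
  -- (a) ⟨v j, w⟩ = 0 for j > i
  have ha : ∀ j : Fin n, i < j → ∑ x, v j x * w x = 0 := by
    intro j hj
    have : (inner ℝ (vE j) w : ℝ) = 0 := by
      rw [← hc, inner_sum]
      refine Finset.sum_eq_zero fun k _ => ?_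
      rw [real_inner_smul_right, inner_eq]
      have hne : j ≠ g1 k := by
        intro h
        have h1 : (j : ℕ) = (k : ℕ) := by rw [h]
        have h2 : (k : ℕ) < (i : ℕ) + 1 := k.2
        have h3 : (i : ℕ) < (j : ℕ) := Fin.lt_def.mp hj
        omega
      rw [show (vE j : Fin n → ℝ) = v j from rfl, hv j (g1 k)]
      simp [hne]
    rw [inner_eq] at this
    exact this
  -- (b) ⟨vY j, w⟩ = 0 for j < i
  have hb : ∀ j : Fin n, j < i → ∑ x, vY j x * w x = 0 := by
    intro j hj
    have hmem : vYE j ∈ V2 := by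
      apply Submodule.subset_span
      exact ⟨⟨(j : ℕ), hj⟩, by simp [g2, vYE]⟩
    have := (Submodule.mem_orthogonal V2 w).mp hw2 _ hmem
    rw [inner_eq] at this
    exact this
  -- positivity
  have hsq : 0 < ∑ x, w x ^ 2 := by
    have : (inner ℝ w w : ℝ) ≠ 0 := fun h => hwne (inner_self_eq_zero.mp h)
    rw [inner_eq] at this
    have h2 : ∑ x, w x * w x = ∑ x, w x ^2 := Finset.sum_congr rfl fun x _ => (sq (w x)).symm ▸ by ring
    rw [h2] at this
    rcases this.lt_or_gt with h | h
    · exact absurd h (not_lt.mpr (by positivity))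
    · exact h
  have hXw : ∑ a, ((X.mulVec w) a)^2 = ∑ j, (σX j * (∑ x, v j x * w x))^2 := by
    rw [hX]; exact mulVec_norm_sq σX u v hu univ w
  have hYw : ∑ a, ((Y.mulVec w) a)^2 = ∑ j, (σY j * (∑ x, vY j x * w x))^2 := by
    rw [hY]; exact mulVec_norm_sq σY uY vY huY univ w
  have hXlow : σX i^2 * (∑ x, w x^2) ≤ ∑ a, ((X.mulVec w) a)^2 := by
    rw [hXw, ← parseval v hv w, Finset.mul_sum]
    refine Finset.sum_le_sum fun j _ => ?_
    by_cases hij : i < j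
    · rw [ha j hij]; simp
    · push_neg at hij
      have h1 : σX i ≤ σX j := hσXmono hij
      have h2 : 0 ≤ σX i := hσX0 i
      have h3 : σX i^2 ≤ σX j^2 := by nlinarith
      rw [mul_pow]
      exact mul_le_mul_of_nonneg_right h3 (sq_nonneg _)
  have hYup : ∑ a, ((Y.mulVec w) a)^2 ≤ σY i^2 * (∑ x, w x^2) := by
    rw [hYw, ← parseval vY hvY w, Finset.mul_sum]
    refine Finset.sum_le_sum fun j _ => ?_
    by_cases hij : j < i
    · rw [hb j hij]; simp
    · push_neg at hij
      have h1 : σY j ≤ σY i := hσYmono hij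
      have h2 : 0 ≤ σY j := hσY0 j
      have h3 : σY j^2 ≤ σY i^2 := by nlinarith
      rw [mul_pow]
      exact mul_le_mul_of_nonneg_right h3 (sq_nonneg _)
  have hsw : 0 < Real.sqrt (∑ x, w x ^2) := Real.sqrt_pos.mpr hsq
  have hXsplit : ∀ a : Fin n, (X.mulVec w) a = (Y.mulVec w) a + ((X - Y).mulVec w) a := by
    intro a
    rw [Matrix.sub_mulVec]
    simp
  have step1 : σX i * Real.sqrt (∑ x, w x^2) ≤ Real.sqrt (∑ a, ((X.mulVec w) a)^2) := by
    have h1 : σX i * Real.sqrt (∑ x, w x^2) = Real.sqrt (σX i^2 * (∑ x, w x^2)) := by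
      rw [Real.sqrt_mul (sq_nonneg _), Real.sqrt_sq (hσX0 i)]
    rw [h1]
    exact Real.sqrt_le_sqrt hXlow
  have step2 : Real.sqrt (∑ a, ((X.mulVec w) a)^2)
      ≤ Real.sqrt (∑ a, ((Y.mulVec w) a)^2) + Real.sqrt (∑ a, (((X - Y).mulVec w) a)^2) := by
    have h1 : ∑ a, ((X.mulVec w) a)^2 = ∑ a, ((Y.mulVec w) a + ((X - Y).mulVec w) a)^2 :=
      Finset.sum_congr rfl fun a _ => by rw [hXsplit a]
    rw [h1]
    exact minkowski _ _
  have step3 : Real.sqrt (∑ a, ((Y.mulVec w) a)^2) ≤ σY i * Real.sqrt (∑ x, w x^2) := by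
    have h1 : σY i * Real.sqrt (∑ x, w x^2) = Real.sqrt (σY i^2 * (∑ x, w x^2)) := by
      rw [Real.sqrt_mul (sq_nonneg _), Real.sqrt_sq (hσY0 i)]
    rw [h1]
    exact Real.sqrt_le_sqrt hYup
  have step4 := hE w
  have final : σX i * Real.sqrt (∑ x, w x^2) ≤ (σY i + ε) * Real.sqrt (∑ x, w x^2) := by
    calc σX i * Real.sqrt (∑ x, w x^2) ≤ _ := step1
      _ ≤ _ := step2
      _ ≤ σY i * Real.sqrt (∑ x, w x^2) + ε * Real.sqrt (∑ x, w x^2) := add_le_add step3 step4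
      _ = (σY i + ε) * Real.sqrt (∑ x, w x^2) := by ring
  exact le_of_mul_le_mul_right final hsw
end Stmt12

set_option maxHeartbeats 2000000

/-- USVT error bound, Lemma 1 of Xu 2017: if `τ ≥ (1+δ)‖X − Y‖` (operator
norm, expressed as a bound on all vectors in Euclidean norm), and `X̆` is obtained from a
singular value decomposition of `X` by keeping only singular values exceeding `τ`, then
`‖X̆ − Y‖_F² ≤ 16 min_{0 ≤ r ≤ n} (τ² r + ((1+δ)/δ)² ∑_{i ≥ r+1} σᵢ(Y)²)`. -/
theorem stmt_12 {n : ℕ} (X Y : Matrix (Fin n) (Fin n) ℝ) (δ τ : ℝ) (hδ : 0 < δ)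
    -- SVD of X
    (σX : Fin n → ℝ) (u v : Fin n → Fin n → ℝ)
    (hσX0 : ∀ i, 0 ≤ σX i) (hσXmono : Antitone σX)
    (hu : ∀ i j, ∑ x, u i x * u j x = if i = j then (1 : ℝ) else 0)
    (hv : ∀ i j, ∑ x, v i x * v j x = if i = j then (1 : ℝ) else 0)
    (hX : X = ∑ i, σX i • Matrix.vecMulVec (u i) (v i))
    -- SVD of Y (defining the singular values σY of Y)
    (σY : Fin n → ℝ) (uY vY : Fin n → Fin n → ℝ)
    (hσY0 : ∀ i, 0 ≤ σY i) (hσYmono : Antitone σY)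
    (huY : ∀ i j, ∑ x, uY i x * uY j x = if i = j then (1 : ℝ) else 0)
    (hvY : ∀ i j, ∑ x, vY i x * vY j x = if i = j then (1 : ℝ) else 0)
    (hY : Y = ∑ i, σY i • Matrix.vecMulVec (uY i) (vY i))
    -- τ ≥ (1+δ)·‖X − Y‖ (operator norm)
    (hτ : ∀ w : Fin n → ℝ,
      Real.sqrt (∑ i, ((X - Y).mulVec w) i ^ 2) ≤
        (τ / (1 + δ)) * Real.sqrt (∑ i, w i ^ 2)) :
    ∀ r : ℕ, r ≤ n →
      ∑ i, ∑ j,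
          ((∑ i' ∈ Finset.univ.filter (fun i' : Fin n => τ < σX i'),
              σX i' • Matrix.vecMulVec (u i') (v i')) i j - Y i j) ^ 2 ≤
        16 * (τ ^ 2 * (r : ℝ) +
          ((1 + δ) / δ) ^ 2 *
            ∑ i ∈ Finset.univ.filter (fun i : Fin n => r ≤ (i : ℕ)), σY i ^ 2) := by
  classical
  intro r hr
  rcases Nat.eq_zero_or_pos n with hn | hn
  · subst hn
    have hr0 : r = 0 := Nat.le_zero.mp hr
    subst hr0
    simp
  -- notation
  have h1δ : (0:ℝ) < 1 + δ := by linarith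
  set ε := τ / (1 + δ) with hεdef
  -- τ ≥ 0
  have hε0 : 0 ≤ ε := by
    have h := hτ (fun _ => (1:ℝ))
    have hones : ∑ i : Fin n, ((1:ℝ))^2 = (n:ℝ) := by simp
    have hpos : 0 < Real.sqrt (∑ i : Fin n, ((1:ℝ))^2) := by
      rw [hones]
      exact Real.sqrt_pos.mpr (by exact_mod_cast hn)
    have hnn : 0 ≤ Real.sqrt (∑ i, ((X - Y).mulVec (fun _ => (1:ℝ))) i ^ 2) := Real.sqrt_nonneg _
    nlinarith
  have hτ0 : 0 ≤ τ := by
    have hτε : τ = ε * (1 + δ) := by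
      rw [hεdef]; field_simp
    nlinarith
  have hετ : ε ≤ τ := by
    rw [hεdef]
    calc τ / (1 + δ) ≤ τ / 1 := by
          apply div_le_div_of_nonneg_left hτ0 ?_ ?_ <;> linarith
      _ = τ := by ring
  -- Weyl
  have hweyl : ∀ i, σX i ≤ σY i + ε :=
    Stmt12.weyl X Y ε σX u v hσX0 hσXmono hu hv hX σY uY vY hσY0 hσYmono huY hvY hY hτ
  -- finsets
  set S : Finset (Fin n) := Finset.univ.filter (fun i' : Fin n => τ < σX i') with hSdef
  set Rlt : Finset (Fin n) := Finset.univ.filter (fun i : Fin n => (i:ℕ) < r) with hRltdef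
  set Rge : Finset (Fin n) := Finset.univ.filter (fun i : Fin n => r ≤ (i:ℕ)) with hRgedef
  set T : ℝ := ∑ i ∈ Rge, σY i ^ 2 with hTdef
  have hT0 : 0 ≤ T := Finset.sum_nonneg fun i _ => sq_nonneg _
  set ci : ℝ := (1 + δ) / δ with hcidef
  have hci1 : 1 ≤ ci := by
    rw [hcidef, le_div_iff₀ hδ]; linarith
  -- matrices
  set Xh : Matrix (Fin n) (Fin n) ℝ := ∑ i ∈ S, σX i • Matrix.vecMulVec (u i) (v i) with hXhdef
  set Yr : Matrix (Fin n) (Fin n) ℝ := ∑ i ∈ Rlt, σY i • Matrix.vecMulVec (uY i) (vY i) with hYrdef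
  set Sc : Finset (Fin n) := Finset.univ.filter (fun i : Fin n => ¬ τ < σX i) with hScdef
  set Dm : Matrix (Fin n) (Fin n) ℝ := ∑ i ∈ Sc, σX i • Matrix.vecMulVec (u i) (v i) with hDmdef
  have hXsplit : Xh + Dm = X := by
    rw [hXhdef, hDmdef, hX, hSdef, hScdef]
    exact Finset.sum_filter_add_sum_filter_not Finset.univ _ _
  -- operator bound for Dm
  have hDbound : ∀ p : Fin n → ℝ, ∑ a, ((Dm.mulVec p) a)^2 ≤ τ^2 * ∑ x, p x ^ 2 := by
    intro p
    rw [hDmdef, Stmt12.mulVec_norm_sq σX u v hu Sc p]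
    calc ∑ i ∈ Sc, (σX i * (∑ x, v i x * p x))^2
        ≤ ∑ i ∈ Sc, τ^2 * (∑ x, v i x * p x)^2 := by
          refine Finset.sum_le_sum fun i hi => ?_
          have h1 : ¬ τ < σX i := (Finset.mem_filter.mp hi).2
          push_neg at h1
          have h2 : 0 ≤ σX i := hσX0 i
          rw [mul_pow]
          exact mul_le_mul_of_nonneg_right (by nlinarith) (sq_nonneg _)
      _ ≤ ∑ i, τ^2 * (∑ x, v i x * p x)^2 := by
          refine Finset.sum_le_sum_of_subset_of_nonneg (Finset.filter_subset _ _) ?_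
          intro i _ _; positivity
      _ = τ^2 * ∑ i, (∑ x, v i x * p x)^2 := by rw [Finset.mul_sum]
      _ = τ^2 * ∑ x, p x ^2 := by rw [Stmt12.parseval v hv p]
  -- operator bound for M := Xh − Y
  have hMbound : ∀ p : Fin n → ℝ,
      ∑ a, (((Xh - Y).mulVec p) a)^2 ≤ (τ + ε)^2 * ∑ x, p x ^ 2 := by
    intro p
    have hsplit : ∀ a, ((Xh - Y).mulVec p) a = ((X - Y).mulVec p) a + (-((Dm.mulVec p) a)) := by
      intro a
      have : Xh - Y = (X - Y) - Dm := by rw [← hXsplit]; abel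
      rw [this, Matrix.sub_mulVec]
      simp [sub_eq_add_neg]
    have h1 : ∑ a, (((Xh - Y).mulVec p) a)^2
        = ∑ a, (((X - Y).mulVec p) a + (-((Dm.mulVec p) a)))^2 :=
      Finset.sum_congr rfl fun a _ => by rw [hsplit a]
    have hmink := Stmt12.minkowski (fun a => ((X - Y).mulVec p) a) (fun a => -((Dm.mulVec p) a))
    have hneg : ∑ a, (-((Dm.mulVec p) a))^2 = ∑ a, ((Dm.mulVec p) a)^2 :=
      Finset.sum_congr rfl fun a _ => by ring
    have hD : Real.sqrt (∑ a, ((Dm.mulVec p) a)^2) ≤ τ * Real.sqrt (∑ x, p x ^2) := by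
      have := Real.sqrt_le_sqrt (hDbound p)
      rwa [Real.sqrt_mul (sq_nonneg τ), Real.sqrt_sq hτ0] at this
    have hE := hτ p
    have htotal : Real.sqrt (∑ a, (((Xh - Y).mulVec p) a)^2)
        ≤ (τ + ε) * Real.sqrt (∑ x, p x ^2) := by
      rw [h1]
      calc Real.sqrt (∑ a, (((X - Y).mulVec p) a + (-((Dm.mulVec p) a)))^2)
          ≤ Real.sqrt (∑ a, (((X - Y).mulVec p) a)^2)
            + Real.sqrt (∑ a, (-((Dm.mulVec p) a))^2) := hmink
        _ ≤ ε * Real.sqrt (∑ x, p x ^2) + τ * Real.sqrt (∑ x, p x ^2) := by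
            rw [hneg]; exact add_le_add hE hD
        _ = (τ + ε) * Real.sqrt (∑ x, p x ^2) := by ring
    have h2 : ∑ a, (((Xh - Y).mulVec p) a)^2
        = (Real.sqrt (∑ a, (((Xh - Y).mulVec p) a)^2))^2 :=
      (Real.sq_sqrt (by positivity)).symm
    rw [h2]
    calc (Real.sqrt (∑ a, (((Xh - Y).mulVec p) a)^2))^2
        ≤ ((τ + ε) * Real.sqrt (∑ x, p x ^2))^2 := by
          apply pow_le_pow_left₀ (Real.sqrt_nonneg _) htotal
      _ = (τ + ε)^2 * (Real.sqrt (∑ x, p x ^2))^2 := by ring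
      _ = (τ + ε)^2 * ∑ x, p x ^2 := by rw [Real.sq_sqrt (by positivity)]
  -- counting
  have hcard_lt : (S.filter (fun i : Fin n => (i:ℕ) < r)).card ≤ r := by
    have := Finset.card_le_card_of_injOn (s := S.filter (fun i : Fin n => (i:ℕ) < r))
      (t := Finset.range r) (fun i : Fin n => (i:ℕ))
      (fun i hi => Finset.mem_range.mpr (Finset.mem_filter.mp hi).2)
      (fun i _ j _ h => Fin.val_injective h)
    simpa using this
  have hτσ : ∀ i ∈ S.filter (fun i : Fin n => ¬ (i:ℕ) < r), τ^2 ≤ ci^2 * σY i ^2 := by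
    intro i hi
    have h1 : τ < σX i := (Finset.mem_filter.mp (Finset.mem_filter.mp hi).1).2
    have h2 := hweyl i
    have h3 : τ - ε ≤ σY i := by linarith
    have h4 : τ ≤ ci * σY i := by
      have h5 : ci * (τ - ε) ≤ ci * σY i := mul_le_mul_of_nonneg_left h3 (by linarith)
      have h6 : ci * (τ - ε) = τ := by
        rw [hcidef, hεdef]; field_simp; ring
      linarith
    nlinarith [sq_nonneg (σY i)]
  have hcount : τ^2 * (S.card : ℝ) ≤ τ^2 * r + ci^2 * T := by
    have hsplitS : S.card = (S.filter (fun i : Fin n => (i:ℕ) < r)).card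
        + (S.filter (fun i : Fin n => ¬ (i:ℕ) < r)).card :=
      (Finset.card_filter_add_card_filter_not _).symm
    have hsub : S.filter (fun i : Fin n => ¬ (i:ℕ) < r) ⊆ Rge := by
      intro i hi
      have h1 : ¬ (i:ℕ) < r := (Finset.mem_filter.mp hi).2
      rw [hRgedef, Finset.mem_filter]
      exact ⟨Finset.mem_univ _, by omega⟩
    have h7 : τ^2 * ((S.filter (fun i : Fin n => ¬ (i:ℕ) < r)).card : ℝ) ≤ ci^2 * T := by
      calc τ^2 * ((S.filter (fun i : Fin n => ¬ (i:ℕ) < r)).card : ℝ)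
          = ∑ i ∈ S.filter (fun i : Fin n => ¬ (i:ℕ) < r), τ^2 := by
            rw [Finset.sum_const, nsmul_eq_mul]; ring
        _ ≤ ∑ i ∈ S.filter (fun i : Fin n => ¬ (i:ℕ) < r), ci^2 * σY i ^2 :=
            Finset.sum_le_sum hτσ
        _ ≤ ∑ i ∈ Rge, ci^2 * σY i ^2 := by
            refine Finset.sum_le_sum_of_subset_of_nonneg hsub ?_
            intro i _ _; positivity
        _ = ci^2 * T := by rw [hTdef, Finset.mul_sum]
    have h8 : τ^2 * ((S.filter (fun i : Fin n => (i:ℕ) < r)).card : ℝ) ≤ τ^2 * r := by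
      apply mul_le_mul_of_nonneg_left _ (sq_nonneg τ)
      exact_mod_cast hcard_lt
    have h9 : (S.card : ℝ) = ((S.filter (fun i : Fin n => (i:ℕ) < r)).card : ℝ)
        + ((S.filter (fun i : Fin n => ¬ (i:ℕ) < r)).card : ℝ) := by exact_mod_cast hsplitS
    nlinarith
  -- subspace W and orthonormal basis
  have hRlt_card : Rlt.card ≤ r := by
    have h := Finset.card_le_card_of_injOn (s := Rlt) (t := Finset.range r)
      (fun i : Fin n => (i:ℕ))
      (fun i hi => Finset.mem_range.mpr (Finset.mem_filter.mp hi).2)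
      (fun i _ j _ h => Fin.val_injective h)
    simpa using h
  set Eu := EuclideanSpace ℝ (Fin n) with hEudef
  let vE : Fin n → Eu := fun j => WithLp.toLp 2 (v j)
  let vYE : Fin n → Eu := fun j => WithLp.toLp 2 (vY j)
  set F : Finset Eu := S.image vE ∪ Rlt.image vYE with hFdef
  set W : Submodule ℝ Eu := Submodule.span ℝ (F : Set Eu) with hWdef
  have hdle : Module.finrank ℝ W ≤ S.card + r := by
    have h1 := finrank_span_finset_le_card (R := ℝ) F
    rw [Set.finrank] at h1
    have h2 : F.card ≤ S.card + r := by
      calc F.card ≤ (S.image vE).card + (Rlt.image vYE).card := Finset.card_union_le _ _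
        _ ≤ S.card + Rlt.card := add_le_add Finset.card_image_le Finset.card_image_le
        _ ≤ S.card + r := by omega
    exact h1.trans h2
  set d := Module.finrank ℝ W with hddef
  let b := stdOrthonormalBasis ℝ W
  let wb : Fin d → (Fin n → ℝ) := fun k => ((b k : W) : Eu)
  have hwb : ∀ k l, ∑ x, wb k x * wb l x = if k = l then (1:ℝ) else 0 := by
    intro k l
    have h1 := orthonormal_iff_ite.mp b.orthonormal k l
    rw [Submodule.coe_inner, Stmt12.inner_eq] at h1
    exact h1
  have hproj : ∀ p : Fin n → ℝ, (WithLp.toLp 2 p) ∈ W →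
      ∀ y, ∑ k, (∑ x, wb k x * p x) * wb k y = p y := by
    intro p hp y
    have hrepr := b.sum_repr' (⟨WithLp.toLp 2 p, hp⟩ : W)
    have h3 : ∑ k, (inner ℝ (b k) (⟨WithLp.toLp 2 p, hp⟩ : W) : ℝ) • ((b k : W) : Eu) = (WithLp.toLp 2 p) := by
      have h2 := congrArg (Subtype.val) hrepr
      show _ = ((⟨WithLp.toLp 2 p, hp⟩ : W) : Eu)
      rw [← h2]
      simp only [AddSubmonoidClass.coe_finset_sum, Submodule.coe_smul]
    have h4 := congrArg (fun z : Eu => z y) h3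
    simp only [] at h4
    rw [Stmt12.sum_smul_apply] at h4
    have h5 : ∀ k : Fin d, (inner ℝ (b k) (⟨WithLp.toLp 2 p, hp⟩ : W) : ℝ) = ∑ x, wb k x * p x := by
      intro k
      rw [Submodule.coe_inner, Stmt12.inner_eq]
    calc ∑ k, (∑ x, wb k x * p x) * wb k y
        = ∑ k, (inner ℝ (b k) (⟨WithLp.toLp 2 p, hp⟩ : W) : ℝ) * wb k y :=
          Finset.sum_congr rfl fun k _ => by rw [h5 k]
      _ = p y := h4
  -- the rows of Xh - Yr lie in W
  have hrowmem : ∀ a : Fin n, (WithLp.toLp 2 fun y => Xh a y - Yr a y) ∈ W := by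
    intro a
    have hEuEq : (WithLp.toLp 2 fun y => Xh a y - Yr a y)
        = (∑ i ∈ S, (σX i * u i a) • vE i) - (∑ i ∈ Rlt, (σY i * uY i a) • vYE i) := by
      ext y
      have hA : ((∑ i ∈ S, (σX i * u i a) • vE i : Eu)) y = ∑ i ∈ S, (σX i * u i a) * v i y := by
        have : ∀ (s : Finset (Fin n)), ((∑ i ∈ s, (σX i * u i a) • vE i : Eu)) y
            = ∑ i ∈ s, (σX i * u i a) * v i y := by
          intro s
          induction s using Finset.induction with
          | empty => rfl
          | insert _ _ h ih => rw [Finset.sum_insert h, Finset.sum_insert h, ← ih]; rfl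
        exact this S
      have hB : ((∑ i ∈ Rlt, (σY i * uY i a) • vYE i : Eu)) y
          = ∑ i ∈ Rlt, (σY i * uY i a) * vY i y := by
        have : ∀ (s : Finset (Fin n)), ((∑ i ∈ s, (σY i * uY i a) • vYE i : Eu)) y
            = ∑ i ∈ s, (σY i * uY i a) * vY i y := by
          intro s
          induction s using Finset.induction with
          | empty => rfl
          | insert _ _ h ih => rw [Finset.sum_insert h, Finset.sum_insert h, ← ih]; rfl
        exact this Rlt
      show Xh a y - Yr a y = _
      have h6 : ((∑ i ∈ S, (σX i * u i a) • vE i - ∑ i ∈ Rlt, (σY i * uY i a) • vYE i : Eu)) y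
          = ((∑ i ∈ S, (σX i * u i a) • vE i : Eu)) y - ((∑ i ∈ Rlt, (σY i * uY i a) • vYE i : Eu)) y := rfl
      rw [h6, hA, hB, hXhdef, hYrdef, Stmt12.entry_comb, Stmt12.entry_comb]
    rw [hEuEq]
    apply Submodule.sub_mem
    · apply Submodule.sum_mem
      intro i hi
      apply Submodule.smul_mem
      apply Submodule.subset_span
      rw [hFdef]
      apply Finset.mem_coe.mpr
      exact Finset.mem_union_left _ (Finset.mem_image_of_mem vE hi)
    · apply Submodule.sum_mem
      intro i hi
      apply Submodule.smul_mem
      apply Submodule.subset_span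
      rw [hFdef]
      apply Finset.mem_coe.mpr
      exact Finset.mem_union_right _ (Finset.mem_image_of_mem vYE hi)
  -- rows
  set m : Fin n → Fin n → ℝ := fun a y => Xh a y - Y a y with hmdef
  have hLHS : ∑ a, ∑ y, (Xh a y - Y a y)^2
      = (∑ a, ∑ k, (∑ x, wb k x * m a x)^2)
        + ∑ a, ∑ y, (m a y - ∑ k, (∑ x, wb k x * m a x) * wb k y)^2 := by
    rw [← Finset.sum_add_distrib]
    refine Finset.sum_congr rfl fun a _ => ?_
    have := Stmt12.proj_pyth wb hwb (m a)
    have hme : ∑ y, (Xh a y - Y a y)^2 = ∑ y, m a y ^2 := rfl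
    rw [hme]
    linarith
  -- Part 1 bound
  have hPart1 : ∑ a, ∑ k, (∑ x, wb k x * m a x)^2 ≤ (d : ℝ) * (τ+ε)^2 := by
    rw [Finset.sum_comm]
    have hk : ∀ k : Fin d, ∑ a, (∑ x, wb k x * m a x)^2 ≤ (τ+ε)^2 := by
      intro k
      have h1 : ∀ a, ∑ x, wb k x * m a x = ((Xh - Y).mulVec (wb k)) a := by
        intro a
        show _ = ∑ x, (Xh - Y) a x * wb k x
        exact Finset.sum_congr rfl fun x _ => by rw [Matrix.sub_apply]; ring
      have h2 := hMbound (wb k)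
      have h3 : ∑ x, wb k x ^2 = 1 := by
        have h4 := hwb k k
        simp at h4
        rw [← h4]
        exact Finset.sum_congr rfl fun x _ => by ring
      calc ∑ a, (∑ x, wb k x * m a x)^2
          = ∑ a, (((Xh - Y).mulVec (wb k)) a)^2 :=
            Finset.sum_congr rfl fun a _ => by rw [h1 a]
        _ ≤ (τ+ε)^2 * ∑ x, wb k x ^2 := h2
        _ = (τ+ε)^2 := by rw [h3]; ring
    calc ∑ k : Fin d, ∑ a, (∑ x, wb k x * m a x)^2
        ≤ ∑ k : Fin d, (τ+ε)^2 := Finset.sum_le_sum fun k _ => hk k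
      _ = (d : ℝ) * (τ+ε)^2 := by rw [Finset.sum_const, nsmul_eq_mul]; simp
  -- Part 2 bound
  have hYcomp : Y - Yr = ∑ i ∈ Rge, σY i • Matrix.vecMulVec (uY i) (vY i) := by
    have h1 := Finset.sum_filter_add_sum_filter_not Finset.univ (fun i : Fin n => (i:ℕ) < r)
      (fun i => σY i • Matrix.vecMulVec (uY i) (vY i))
    have h2 : Finset.univ.filter (fun i : Fin n => ¬ (i:ℕ) < r) = Rge := by
      rw [hRgedef]
      apply Finset.filter_congr
      intro i _
      simp [not_lt]
    rw [h2] at h1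
    rw [hYrdef, hY, ← h1]
    abel
  have hfrobYc : ∑ a, ∑ y, ((Y - Yr) a y)^2 = T := by
    rw [hYcomp, Stmt12.frob_comb σY uY vY huY hvY Rge, hTdef]
  have hPart2 : ∑ a, ∑ y, (m a y - ∑ k, (∑ x, wb k x * m a x) * wb k y)^2 ≤ T := by
    rw [← hfrobYc]
    refine Finset.sum_le_sum fun a _ => ?_
    set q : Fin n → ℝ := fun y => Yr a y - Y a y with hqdef
    set pXr : Fin n → ℝ := fun y => Xh a y - Yr a y with hpXrdef
    have hmaq : ∀ x, m a x = pXr x + q x := fun x => by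
      rw [hpXrdef, hqdef, hmdef]; ring
    have hcsplit : ∀ k : Fin d, ∑ x, wb k x * m a x
        = (∑ x, wb k x * pXr x) + (∑ x, wb k x * q x) := by
      intro k
      rw [← Finset.sum_add_distrib]
      exact Finset.sum_congr rfl fun x _ => by rw [hmaq x]; ring
    have hstep : ∀ y, m a y - ∑ k, (∑ x, wb k x * m a x) * wb k y
        = q y - ∑ k, (∑ x, wb k x * q x) * wb k y := by
      intro y
      have h1 : ∑ k, (∑ x, wb k x * m a x) * wb k y
          = (∑ k, (∑ x, wb k x * pXr x) * wb k y) + ∑ k, (∑ x, wb k x * q x) * wb k y := by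
        rw [← Finset.sum_add_distrib]
        exact Finset.sum_congr rfl fun k _ => by rw [hcsplit k]; ring
      have h2 : ∑ k, (∑ x, wb k x * pXr x) * wb k y = pXr y := hproj pXr (hrowmem a) y
      rw [h1, h2, hmaq y]
      ring
    have h3 : ∑ y, (m a y - ∑ k, (∑ x, wb k x * m a x) * wb k y)^2
        = ∑ y, (q y - ∑ k, (∑ x, wb k x * q x) * wb k y)^2 :=
      Finset.sum_congr rfl fun y _ => by rw [hstep y]
    rw [h3, Stmt12.proj_pyth wb hwb q]
    have h4 : 0 ≤ ∑ k, (∑ x, wb k x * q x)^2 := Finset.sum_nonneg fun k _ => sq_nonneg _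
    have h5 : ∑ y, q y ^2 = ∑ y, ((Y - Yr) a y)^2 := by
      refine Finset.sum_congr rfl fun y _ => ?_
      rw [hqdef, Matrix.sub_apply]
      ring
    linarith
  -- final assembly
  have hd' : (d : ℝ) ≤ (S.card : ℝ) + r := by exact_mod_cast hdle
  have hτε2 : (τ+ε)^2 ≤ 4*τ^2 := by nlinarith
  have hdnn : (0:ℝ) ≤ (d:ℝ) := Nat.cast_nonneg d
  have hmul : (d : ℝ) * (τ+ε)^2 ≤ ((S.card : ℝ) + r) * (4*τ^2) :=
    mul_le_mul hd' hτε2 (by positivity) (by positivity)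
  have hci2 : 1 ≤ ci^2 := by nlinarith
  have h12 : 0 ≤ (ci^2 - 1) * T := mul_nonneg (by linarith) hT0
  have hτr : 0 ≤ τ^2 * (r:ℝ) := by positivity
  calc ∑ a, ∑ y, (Xh a y - Y a y)^2
      = (∑ a, ∑ k, (∑ x, wb k x * m a x)^2)
        + ∑ a, ∑ y, (m a y - ∑ k, (∑ x, wb k x * m a x) * wb k y)^2 := hLHS
    _ ≤ (d : ℝ) * (τ+ε)^2 + T := add_le_add hPart1 hPart2
    _ ≤ 16 * (τ^2 * r + ci^2 * T) := by nlinarith [hcount, hT0, hmul, hci2, h12, hτr]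
end

section
/- Work in the correlated heterogeneous Erdős–Rényi model (A,B) ∼ CorrER(Q₁,Q₂,R) on 2n vertices with Q₁ having blocks (p, r; r, q), Q₂ having blocks (q, r; r, p), and R having blocks (ϱ₁, ϱ₂; ϱ₂, ϱ₁), where each block is n×n constant. Let P be a permutation matrix swapping block 1 and block 2 (so P Q₂ Pᵀ = Q₁, with corresponding permutation having no fixed pairs inside blocks). Then (1/2)·𝔼[tr(A P B Pᵀ) − tr(A B)] ≥ (n choose 2)·[(p−q)² − 2ϱ₁√(p(1−p)q(1−q))] − n²·ϱ₂·r(1−r) − n·r². -/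
open MeasureTheory Matrix Finset

/-- The 2×2-block constant matrix on `2n` vertices with diagonal blocks `a` (block 1)
and `c` (block 2) and off-diagonal blocks `b`. -/
def blockM (n : ℕ) (a b c : ℝ) : Matrix (Fin (2 * n)) (Fin (2 * n)) ℝ :=
  fun u w =>
    if (u : ℕ) < n then (if (w : ℕ) < n then a else b)
    else (if (w : ℕ) < n then b else c)

lemma trace_mul_expand {m : ℕ} (M N : Matrix (Fin m) (Fin m) ℝ) :
    Matrix.trace (M * N) = ∑ u, ∑ v, M u v * N v u := by
  simp [Matrix.trace, Matrix.mul_apply, Matrix.diag]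

lemma trace_perm_conj {m : ℕ} (σ : Equiv.Perm (Fin m)) (M N : Matrix (Fin m) (Fin m) ℝ) :
    Matrix.trace (M * σ.permMatrix ℝ * N * (σ.permMatrix ℝ)ᵀ) =
      ∑ u, ∑ v, M u v * N (σ v) (σ u) := by
  have hPT : (σ.permMatrix ℝ)ᵀ = (σ.symm).toPEquiv.toMatrix := by
    rw [Equiv.Perm.permMatrix, ← PEquiv.toMatrix_symm, Equiv.toPEquiv_symm]
  rw [hPT, PEquiv.mul_toMatrix_toPEquiv, Equiv.symm_symm]
  rw [show σ.permMatrix ℝ = σ.toPEquiv.toMatrix from rfl, PEquiv.mul_toMatrix_toPEquiv]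
  simp only [Matrix.trace, Matrix.diag, Matrix.submatrix_apply, Matrix.mul_apply, id]
  refine Finset.sum_congr rfl fun u _ => ?_
  exact (Fintype.sum_equiv σ _ _ fun x => by simp).symm

/-- auxiliary block-pattern function for the per-pair lower bound -/
def base (n : ℕ) (α β γ : ℝ) (u v : Fin (2*n)) : ℝ :=
  if (u : ℕ) < n then (if (v : ℕ) < n then α else γ)
  else (if (v : ℕ) < n then γ else β)

lemma card_blk (n : ℕ) :
    ((Finset.univ : Finset (Fin (2*n))).filter fun u : Fin (2*n) => (u : ℕ) < n).card = n := by
  have h : ((Finset.univ : Finset (Fin (2*n))).filter fun u : Fin (2*n) => (u : ℕ) < n) =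
      Finset.map ⟨fun i : Fin n => (⟨(i : ℕ), by omega⟩ : Fin (2*n)),
        fun a b hab => by simpa [Fin.ext_iff] using hab⟩ Finset.univ := by
    ext u
    simp only [Finset.mem_filter, Finset.mem_univ, true_and, Finset.mem_map,
      Function.Embedding.coeFn_mk]
    constructor
    · intro h; exact ⟨⟨(u : ℕ), h⟩, Fin.ext rfl⟩
    · rintro ⟨i, -, rfl⟩; exact i.2
  rw [h, Finset.card_map, Finset.card_univ, Fintype.card_fin]

lemma sum_if_blk (n : ℕ) (x y : ℝ) :
    ∑ v : Fin (2*n), (if (v : ℕ) < n then x else y) = n * x + n * y := by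
  have h2 : ((Finset.univ : Finset (Fin (2*n))).filter fun u : Fin (2*n) => ¬ (u : ℕ) < n).card = n := by
    have h3 := Finset.card_filter_add_card_filter_not
      (s := (Finset.univ : Finset (Fin (2*n)))) (p := fun u => (u : ℕ) < n)
    rw [card_blk] at h3
    simp only [Finset.card_univ, Fintype.card_fin] at h3
    omega
  rw [Finset.sum_ite]
  simp only [Finset.sum_const, nsmul_eq_mul]
  rw [card_blk, h2]

lemma sum_c (n : ℕ) (α β γ : ℝ) :
    ∑ u : Fin (2*n), ∑ v : Fin (2*n), (if u = v then 0 else base n α β γ u v)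
      = n * (n*α + n*γ - α) + n * (n*γ + n*β - β) := by
  have hrow2 : ∀ u : Fin (2*n), ∑ v, base n α β γ u v
      = if (u : ℕ) < n then n*α + n*γ else n*γ + n*β := by
    intro u
    by_cases hu : (u : ℕ) < n
    · simp only [base, if_pos hu]; rw [sum_if_blk]
    · simp only [base, if_neg hu]; rw [sum_if_blk]
  have hdiag : ∀ u : Fin (2*n), base n α β γ u u = if (u : ℕ) < n then α else β := by
    intro u; by_cases hu : (u : ℕ) < n <;> simp [base, hu]
  have hrow : ∀ u : Fin (2*n), ∑ v, (if u = v then 0 else base n α β γ u v)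
      = (∑ v, base n α β γ u v) - base n α β γ u u := by
    intro u
    have h1 : ∑ v, (if u = v then 0 else base n α β γ u v)
        = ∑ v ∈ Finset.univ.erase u, base n α β γ u v := by
      rw [← Finset.add_sum_erase _ (fun v => if u = v then 0 else base n α β γ u v)
        (Finset.mem_univ u), if_pos rfl, zero_add]
      exact Finset.sum_congr rfl fun v hv =>
        if_neg (fun h => (Finset.ne_of_mem_erase hv) h.symm)
    rw [h1, Finset.sum_erase_eq_sub (Finset.mem_univ u)]
  calc ∑ u : Fin (2*n), ∑ v : Fin (2*n), (if u = v then 0 else base n α β γ u v)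
      = ∑ u : Fin (2*n), (if (u : ℕ) < n then n*α + n*γ - α else n*γ + n*β - β) := by
        refine Finset.sum_congr rfl fun u _ => ?_
        rw [hrow u, hrow2 u, hdiag u]
        by_cases hu : (u : ℕ) < n <;> simp [hu]
    _ = n * (n*α + n*γ - α) + n * (n*γ + n*β - β) := sum_if_blk n _ _

/-- in the correlated heterogeneous SBM of Example 1 (`Q₁` with blocks
`(p,r;r,q)`, `Q₂` with blocks `(q,r;r,p)`, `R` with blocks `(ϱ₁,ϱ₂;ϱ₂,ϱ₁)`) and `P` a
block-swapping permutation matrix,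
`(1/2)𝔼[tr(APBPᵀ) − tr(AB)] ≥ C(n,2)[(p−q)² − 2ϱ₁√(p(1−p)q(1−q))] − n²ϱ₂r(1−r) − nr²`. -/
theorem stmt_16 {Ω : Type*} [MeasurableSpace Ω] (μ : Measure Ω) [IsProbabilityMeasure μ]
    {n : ℕ} (hn : 0 < n) (p q r ϱ1 ϱ2 : ℝ)
    (hp : p ∈ Set.Icc (0 : ℝ) 1) (hq : q ∈ Set.Icc (0 : ℝ) 1)
    (hr : r ∈ Set.Icc (0 : ℝ) 1)
    (hϱ1 : ϱ1 ∈ Set.Icc (0 : ℝ) 1) (hϱ2 : ϱ2 ∈ Set.Icc (0 : ℝ) 1)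
    (hqp : q < p)
    (A B : Ω → Matrix (Fin (2 * n)) (Fin (2 * n)) ℝ)
    (hmeasA : ∀ u v, Measurable fun ω => A ω u v)
    (hmeasB : ∀ u v, Measurable fun ω => B ω u v)
    (h01A : ∀ ω u v, A ω u v = 0 ∨ A ω u v = 1)
    (h01B : ∀ ω u v, B ω u v = 0 ∨ B ω u v = 1)
    (hsymmA : ∀ ω, (A ω).IsSymm) (hsymmB : ∀ ω, (B ω).IsSymm)
    (hhollowA : ∀ ω u, A ω u u = 0) (hhollowB : ∀ ω u, B ω u u = 0)
    (hmeanA : ∀ u v, u ≠ v → ∫ ω, A ω u v ∂μ = blockM n p r q u v)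
    (hmeanB : ∀ u v, u ≠ v → ∫ ω, B ω u v ∂μ = blockM n q r p u v)
    -- same-pair correlation given by R
    (hcov : ∀ u v, u ≠ v →
      ∫ ω, A ω u v * B ω u v ∂μ =
        blockM n p r q u v * blockM n q r p u v +
          blockM n ϱ1 ϱ2 ϱ1 u v *
            Real.sqrt (blockM n p r q u v * (1 - blockM n p r q u v) *
              (blockM n q r p u v * (1 - blockM n q r p u v))))
    -- independence across distinct unordered pairs
    (hindep : ∀ u v u' v', u ≠ v → u' ≠ v' →
      ({u, v} : Finset (Fin (2 * n))) ≠ {u', v'} →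
      ∫ ω, A ω u v * B ω u' v' ∂μ = blockM n p r q u v * blockM n q r p u' v')
    (hInt : ∀ u v u' v', Integrable (fun ω => A ω u v * B ω u' v') μ)
    -- σ swaps block 1 and block 2
    (σ : Equiv.Perm (Fin (2 * n))) (hσ : ∀ u : Fin (2 * n), ((u : ℕ) < n) ↔ ¬((σ u : ℕ) < n)) :
    (1 / 2 : ℝ) *
        ∫ ω, (Matrix.trace (A ω * σ.permMatrix ℝ * B ω * (σ.permMatrix ℝ)ᵀ) -
          Matrix.trace (A ω * B ω)) ∂μ ≥
      (n.choose 2 : ℝ) * ((p - q) ^ 2 - 2 * ϱ1 * Real.sqrt (p * (1 - p) * q * (1 - q))) -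
        (n : ℝ) ^ 2 * ϱ2 * r * (1 - r) - (n : ℝ) * r ^ 2 := by
  obtain ⟨hp0, hp1⟩ := hp
  obtain ⟨hq0, hq1⟩ := hq
  obtain ⟨hr0, hr1⟩ := hr
  obtain ⟨h10, h11⟩ := hϱ1
  obtain ⟨h20, h21⟩ := hϱ2
  -- abbreviations for the per-pair lower bounds
  set α : ℝ := p*p - (p*q + ϱ1 * Real.sqrt (p*(1-p)*(q*(1-q)))) with hα
  set β : ℝ := q*q - (q*p + ϱ1 * Real.sqrt (q*(1-q)*(p*(1-p)))) with hβ
  set γ : ℝ := -(ϱ2 * (r*(1-r))) with hγ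
  have hσne : ∀ u : Fin (2*n), σ u ≠ u := by
    intro u h
    have h2 := hσ u
    rw [h] at h2
    tauto
  -- step 1: pointwise trace expansion
  have htr : ∀ ω, Matrix.trace (A ω * σ.permMatrix ℝ * B ω * (σ.permMatrix ℝ)ᵀ) -
      Matrix.trace (A ω * B ω)
      = ∑ u : Fin (2*n), ∑ v : Fin (2*n),
          (A ω u v * B ω (σ u) (σ v) - A ω u v * B ω u v) := by
    intro ω
    rw [trace_perm_conj, trace_mul_expand, ← Finset.sum_sub_distrib]
    refine Finset.sum_congr rfl fun u _ => ?_
    rw [← Finset.sum_sub_distrib]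
    refine Finset.sum_congr rfl fun v _ => ?_
    rw [(hsymmB ω).apply (σ u) (σ v), (hsymmB ω).apply u v]
  -- step 2: exchange integral and sum
  have hIsum : ∫ ω, (Matrix.trace (A ω * σ.permMatrix ℝ * B ω * (σ.permMatrix ℝ)ᵀ) -
      Matrix.trace (A ω * B ω)) ∂μ
      = ∑ u : Fin (2*n), ∑ v : Fin (2*n),
          ((∫ ω, A ω u v * B ω (σ u) (σ v) ∂μ) - (∫ ω, A ω u v * B ω u v ∂μ)) := by
    simp only [htr]
    have hint2 : ∀ u v : Fin (2*n),
        Integrable (fun ω => A ω u v * B ω (σ u) (σ v) - A ω u v * B ω u v) μ :=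
      fun u v => (hInt u v (σ u) (σ v)).sub (hInt u v u v)
    rw [integral_finset_sum _ (fun u _ => integrable_finset_sum _
      (fun v _ => hint2 u v))]
    refine Finset.sum_congr rfl fun u _ => ?_
    rw [integral_finset_sum _ (fun v _ => hint2 u v)]
    exact Finset.sum_congr rfl fun v _ =>
      integral_sub (hInt u v (σ u) (σ v)) (hInt u v u v)
  -- step 3: per-pair bound
  have key : ∀ u v : Fin (2*n),
      (if u = v then 0 else base n α β γ u v) ≤
      (∫ ω, A ω u v * B ω (σ u) (σ v) ∂μ) - (∫ ω, A ω u v * B ω u v ∂μ) := by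
    intro u v
    by_cases huv : u = v
    · subst huv
      rw [if_pos rfl,
        show (fun ω => A ω u u * B ω (σ u) (σ u)) = (fun _ => (0:ℝ)) from
          funext fun ω => by rw [hhollowA]; ring,
        show (fun ω => A ω u u * B ω u u) = (fun _ => (0:ℝ)) from
          funext fun ω => by rw [hhollowA]; ring,
        integral_zero, sub_self]
    · rw [if_neg huv]
      have hσuv : σ u ≠ σ v := fun h => huv (σ.injective h)
      by_cases hfix : σ u = v ∧ σ v = u
      · -- the fixed (cross-block) pair: difference is zero, bound is γ ≤ 0
        have heq : (fun ω => A ω u v * B ω (σ u) (σ v)) = (fun ω => A ω u v * B ω u v) :=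
          funext fun ω => by rw [hfix.1, hfix.2, (hsymmB ω).apply u v]
        rw [heq, sub_self]
        have hγ0 : γ ≤ 0 := by
          rw [hγ]
          have : 0 ≤ ϱ2 * (r*(1-r)) :=
            mul_nonneg h20 (mul_nonneg hr0 (by linarith))
          linarith
        by_cases hu : (u : ℕ) < n
        · have h2 : ¬ ((σ u : ℕ) < n) := (hσ u).mp hu
          rw [hfix.1] at h2
          simp only [base, if_pos hu, if_neg h2]
          exact hγ0
        · have h2 : ((σ u : ℕ) < n) := not_not.mp (fun h => hu ((hσ u).mpr h))
          rw [hfix.1] at h2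
          simp only [base, if_neg hu, if_pos h2]
          exact hγ0
      · -- distinct pairs: use independence
        have hpairne : ({u, v} : Finset (Fin (2*n))) ≠ {σ u, σ v} := by
          intro h
          have h1 : σ u ∈ ({u, v} : Finset (Fin (2*n))) := by rw [h]; simp
          have h2 : σ v ∈ ({u, v} : Finset (Fin (2*n))) := by rw [h]; simp
          simp only [Finset.mem_insert, Finset.mem_singleton] at h1 h2
          rcases h1 with h1 | h1
          · exact hσne u h1
          · rcases h2 with h2 | h2
            · exact hfix ⟨h1, h2⟩
            · exact hσne v h2
        rw [hindep u v (σ u) (σ v) huv hσuv hpairne, hcov u v huv]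
        have hsu := hσ u
        have hsv := hσ v
        by_cases hu : (u : ℕ) < n <;> by_cases hv : (v : ℕ) < n
        · -- block 1 – block 1
          have hsu' : ¬ ((σ u : ℕ) < n) := hsu.mp hu
          have hsv' : ¬ ((σ v : ℕ) < n) := hsv.mp hv
          simp only [blockM, base, if_pos hu, if_pos hv, if_neg hsu', if_neg hsv']
          rw [hα]
        · -- cross
          have hsu' : ¬ ((σ u : ℕ) < n) := hsu.mp hu
          have hsv' : ((σ v : ℕ) < n) := not_not.mp (fun h => hv (hsv.mpr h))
          simp only [blockM, base, if_pos hu, if_neg hv, if_neg hsu', if_pos hsv']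
          rw [hγ, Real.sqrt_mul_self (mul_nonneg hr0 (by linarith))]
          exact le_of_eq (by ring)
        · -- cross
          have hsu' : ((σ u : ℕ) < n) := not_not.mp (fun h => hu (hsu.mpr h))
          have hsv' : ¬ ((σ v : ℕ) < n) := hsv.mp hv
          simp only [blockM, base, if_neg hu, if_pos hv, if_pos hsu', if_neg hsv']
          rw [hγ, Real.sqrt_mul_self (mul_nonneg hr0 (by linarith))]
          exact le_of_eq (by ring)
        · -- block 2 – block 2
          have hsu' : ((σ u : ℕ) < n) := not_not.mp (fun h => hu (hsu.mpr h))
          have hsv' : ((σ v : ℕ) < n) := not_not.mp (fun h => hv (hsv.mpr h))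
          simp only [blockM, base, if_neg hu, if_neg hv, if_pos hsu', if_pos hsv']
          rw [hβ]
  -- step 4: sum the bounds
  have hsum_ge : ∑ u : Fin (2*n), ∑ v : Fin (2*n), (if u = v then 0 else base n α β γ u v)
      ≤ ∑ u : Fin (2*n), ∑ v : Fin (2*n),
          ((∫ ω, A ω u v * B ω (σ u) (σ v) ∂μ) - (∫ ω, A ω u v * B ω u v ∂μ)) :=
    Finset.sum_le_sum fun u _ => Finset.sum_le_sum fun v _ => key u v
  rw [ge_iff_le, hIsum]
  have hhalf : (0:ℝ) ≤ 1/2 := by norm_num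
  have htotal := sum_c n α β γ
  rw [htotal] at hsum_ge
  -- step 5: final arithmetic
  have hsqrt1 : Real.sqrt (p*(1-p)*(q*(1-q))) = Real.sqrt (p * (1 - p) * q * (1 - q)) := by
    congr 1; ring
  have hsqrt2 : Real.sqrt (q*(1-q)*(p*(1-p))) = Real.sqrt (p * (1 - p) * q * (1 - q)) := by
    congr 1; ring
  have hchoose : ((n.choose 2 : ℕ) : ℝ) = (n:ℝ) * ((n:ℝ) - 1) / 2 := by
    rw [Nat.cast_choose_two]
  have hfinal : (n.choose 2 : ℝ) * ((p - q) ^ 2 - 2 * ϱ1 * Real.sqrt (p * (1 - p) * q * (1 - q))) -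
        (n : ℝ) ^ 2 * ϱ2 * r * (1 - r) - (n : ℝ) * r ^ 2
      ≤ (1/2 : ℝ) * ((n:ℝ) * ((n:ℝ)*α + (n:ℝ)*γ - α) + (n:ℝ) * ((n:ℝ)*γ + (n:ℝ)*β - β)) := by
    rw [hchoose, hα, hβ, hγ, hsqrt1, hsqrt2]
    have hnr : (0:ℝ) ≤ (n:ℝ) * r^2 := mul_nonneg (Nat.cast_nonneg n) (sq_nonneg r)
    nlinarith [hnr]
  calc (n.choose 2 : ℝ) * ((p - q) ^ 2 - 2 * ϱ1 * Real.sqrt (p * (1 - p) * q * (1 - q))) -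
        (n : ℝ) ^ 2 * ϱ2 * r * (1 - r) - (n : ℝ) * r ^ 2
      ≤ (1/2 : ℝ) * ((n:ℝ) * ((n:ℝ)*α + (n:ℝ)*γ - α) + (n:ℝ) * ((n:ℝ)*γ + (n:ℝ)*β - β)) := hfinal
    _ ≤ (1/2 : ℝ) * ∑ u : Fin (2*n), ∑ v : Fin (2*n),
          ((∫ ω, A ω u v * B ω (σ u) (σ v) ∂μ) - (∫ ω, A ω u v * B ω u v ∂μ)) :=
        mul_le_mul_of_nonneg_left hsum_ge hhalf
end
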